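/- In the bracket cancellation procedure, applying f_i to a multisegment M changes exactly one ')' in the uncanceled string uc_i(M) into a '(' occupying the position immediately to its right (or, when no ')' exists, adds a '(' at the far left); consequently, the number of uncanceled '(' in S_i(f_i(M)) equals the number of uncanceled '(' in S_i(M) plus 1, and the number of uncanceled ')' in S_i(f_i(M)) equals the number of uncanceled ')' in S_i(M) minus 1 when the latter is positive, and 0 otherwise. -/

import Mathlib

/-- A segment `[a,b]` is a pair of integers. -/
abbrev Seg : Type := ℕ × ℕ

/-- A multisegment is a finite multiset of segments. -/
abbrev MS : Type := Multiset Seg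

/-- `M ∈ MS_n`: all segments `[a,b]` satisfy `1 ≤ a ≤ b ≤ n`. -/
def IsMS (n : ℕ) (M : MS) : Prop := ∀ s ∈ M, 1 ≤ s.1 ∧ s.1 ≤ s.2 ∧ s.2 ≤ n

/-- A bracket: `op` = "(", `cl` = ")". -/
inductive Br | op | cl
deriving DecidableEq

/-- One step of the left-to-right bracket cancellation procedure.  The state
`(cls, ops)` records the tags of the currently uncanceled ")" (in order) and the
currently uncanceled "(" (in order).  A new "(" is appended to `ops`; a new ")"
cancels the last uncanceled "(" if there is one, and otherwise is appended to `cls`. -/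
def step {τ : Type} : (List τ × List τ) → (Br × τ) → (List τ × List τ)
  | (cls, ops), (Br.op, s) => (cls, ops ++ [s])
  | (cls, ops), (Br.cl, s) => if ops.isEmpty then (cls ++ [s], ops) else (cls, ops.dropLast)

/-- Process a tagged bracket string; the result `(cls, ops)` lists the tags of the
uncanceled ")" and the uncanceled "(" (left to right).  The reduced (uncanceled)
string is `")"^cls.length ++ "("^ops.length`. -/
def scan {τ : Type} (l : List (Br × τ)) : List τ × List τ := l.foldl step ([], [])

/-- Number of uncanceled ")" in a tagged bracket string. -/
def urStr {τ : Type} (l : List (Br × τ)) : ℕ := (scan l).1.length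

/-- Number of uncanceled "(" in a tagged bracket string. -/
def epsStr {τ : Type} (l : List (Br × τ)) : ℕ := (scan l).2.length

/-- Tag of the rightmost uncanceled ")", if any. -/
def lastCl {τ : Type} (l : List (Br × τ)) : Option τ := (scan l).1.getLast?

/-- Tag of the leftmost uncanceled "(", if any. -/
def headOp {τ : Type} (l : List (Br × τ)) : Option τ := (scan l).2.head?

/-- The string `S_i(M)`: segments are ordered by increasing height, then by
decreasing lower endpoint; each `[h,i]` contributes "(" and each `[h,i-1]`
contributes ")".  In the block of segments of height `t` the "(" over the
`[i-t+1, i]` segments come immediately before the ")" over the `[i-t, i-1]`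
segments, and blocks appear for `t = 1, 2, …`. -/
def Si (M : MS) (i : ℕ) : List (Br × Seg) :=
  (List.range i).flatMap fun t0 =>
    let t := t0 + 1
    List.replicate (M.count (i - t + 1, i)) (Br.op, ((i - t + 1 : ℕ), i)) ++
    List.replicate (M.count (i - t, i - 1)) (Br.cl, ((i - t : ℕ), i - 1))

/-- The string `S_i^*(M)`: segments ordered by increasing height, then by
increasing lower endpoint; each `[i,j]` contributes "(" and each `[i+1,j]`
contributes ")".  In the block of height `t` the "(" below the `[i, i+t-1]`
segments come immediately before the ")" below the `[i+1, i+t]` segments. -/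
def SiStar (n : ℕ) (M : MS) (i : ℕ) : List (Br × Seg) :=
  (List.range n).flatMap fun t0 =>
    let t := t0 + 1
    List.replicate (M.count (i, i + t - 1)) (Br.op, (i, i + t - 1)) ++
    List.replicate (M.count (i + 1, i + t)) (Br.cl, (i + 1, i + t))

/-- The crystal operator `f_i` on multisegments: it changes the segment `[h,i-1]`
under the rightmost uncanceled ")" of `S_i(M)` into `[h,i]`, or adds a new
segment `[i,i]` if there is no uncanceled ")". -/
def fM (i : ℕ) (M : MS) : MS :=
  match lastCl (Si M i) with
  | some s => M.erase s + {(s.1, i)}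
  | none => M + {(i, i)}

/-- The crystal operator `e_i` on multisegments: it changes the segment `[h,i]`
under the leftmost uncanceled "(" of `S_i(M)` into `[h,i-1]` (deleting it when
`h = i`), or returns `none` (i.e. `0`) if there is no uncanceled "(". -/
def eM (i : ℕ) (M : MS) : Option MS :=
  match headOp (Si M i) with
  | some s => some (if s.1 = i then M.erase s else M.erase s + {(s.1, i - 1)})
  | none => none

/-- The operator `f_i^*`: it changes the segment `[i+1,j]` under the rightmost
uncanceled ")" of `S_i^*(M)` into `[i,j]`, or adds `[i,i]` if there is none. -/
def fMStar (n i : ℕ) (M : MS) : MS :=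
  match lastCl (SiStar n M i) with
  | some s => M.erase s + {(i, s.2)}
  | none => M + {(i, i)}

/-- The operator `e_i^*`: it changes the segment `[i,j]` under the leftmost
uncanceled "(" of `S_i^*(M)` into `[i+1,j]` (deleting it when `j = i`), or
returns `none` if there is no uncanceled "(". -/
def eMStar (n i : ℕ) (M : MS) : Option MS :=
  match headOp (SiStar n M i) with
  | some s => some (if s.2 = i then M.erase s else M.erase s + {(i + 1, s.2)})
  | none => none

/-- The number of boxes labeled `j` in `M`: each segment `[a,b]` contains one
box labeled `j` for each `a ≤ j ≤ b`. -/
def boxes (M : MS) (j : ℕ) : ℕ :=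
  (M.filter (fun s => s.1 ≤ j ∧ j ≤ s.2)).card

/-- The pairing `⟨wt(M), α_i^∨⟩ = #(boxes i-1) + #(boxes i+1) - 2 #(boxes i)`. -/
def wtPair (M : MS) (i : ℕ) : ℤ :=
  (boxes M (i - 1) : ℤ) + (boxes M (i + 1) : ℤ) - 2 * (boxes M i : ℤ)



/-! ### Auxiliary lemmas -/

theorem step_op {τ : Type} (c o : List τ) (s : τ) :
    step (c, o) (Br.op, s) = (c, o ++ [s]) := rfl

theorem step_cl_nil {τ : Type} (c : List τ) (s : τ) :
    step (c, ([] : List τ)) (Br.cl, s) = (c ++ [s], []) := rfl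

theorem step_cl_concat {τ : Type} (c o : List τ) (y s : τ) :
    step (c, o ++ [y]) (Br.cl, s) = (c, o) := by
  show (if (o ++ [y]).isEmpty then _ else (c, (o ++ [y]).dropLast)) = _
  rw [if_neg (by simp), List.dropLast_concat]

theorem foldl_step_cls {τ : Type} (Q : List (Br × τ)) : ∀ (c o : List τ),
    List.foldl step (c, o) Q =
      (c ++ (List.foldl step ([], o) Q).1, (List.foldl step ([], o) Q).2) := by
  induction Q with
  | nil => intro c o; simp
  | cons x Q ih =>
    intro c o
    obtain ⟨b, s⟩ := x
    cases b with
    | op => simp only [List.foldl_cons, step_op]; rw [ih]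
    | cl =>
      rcases List.eq_nil_or_concat' o with rfl | ⟨o', y, rfl⟩
      · simp only [List.foldl_cons, step_cl_nil, List.nil_append]
        rw [ih (c ++ [s]), ih [s]]
        simp
      · simp only [List.foldl_cons, step_cl_concat]
        rw [ih]

theorem foldl_step_ops {τ : Type} (Q : List (Br × τ)) : ∀ (a o : List τ),
    (List.foldl step ([], o) Q).1 = [] →
    List.foldl step ([], a ++ o) Q = ([], a ++ (List.foldl step ([], o) Q).2) := by
  induction Q with
  | nil => intro a o _; simp
  | cons x Q ih =>
    intro a o h
    obtain ⟨b, s⟩ := x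
    cases b with
    | op =>
      simp only [List.foldl_cons, step_op] at h ⊢
      rw [List.append_assoc]
      exact ih a (o ++ [s]) h
    | cl =>
      rcases List.eq_nil_or_concat' o with rfl | ⟨o', y, rfl⟩
      · simp only [List.foldl_cons, step_cl_nil] at h
        rw [foldl_step_cls] at h
        simp at h
      · simp only [List.foldl_cons, step_cl_concat] at h ⊢
        rw [← List.append_assoc, step_cl_concat]
        exact ih a _ h

theorem mem_foldl_step_cls {τ : Type} (Q : List (Br × τ)) : ∀ (c o : List τ) (x : τ),
    x ∈ (List.foldl step (c, o) Q).1 → x ∈ c ∨ (Br.cl, x) ∈ Q := by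
  induction Q with
  | nil => intro c o x h; simp at h; exact Or.inl h
  | cons y Q ih =>
    intro c o x h
    obtain ⟨b, s⟩ := y
    cases b with
    | op =>
      simp only [List.foldl_cons, step_op] at h
      rcases ih _ _ _ h with h' | h'
      · exact Or.inl h'
      · exact Or.inr (List.mem_cons_of_mem _ h')
    | cl =>
      rcases List.eq_nil_or_concat' o with rfl | ⟨o', z, rfl⟩
      · simp only [List.foldl_cons, step_cl_nil] at h
        rcases ih _ _ _ h with h' | h'
        · rcases List.mem_append.1 h' with h'' | h''
          · exact Or.inl h''
          · simp at h''; subst h''; exact Or.inr (by simp)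
        · exact Or.inr (List.mem_cons_of_mem _ h')
      · simp only [List.foldl_cons, step_cl_concat] at h
        rcases ih _ _ _ h with h' | h'
        · exact Or.inl h'
        · exact Or.inr (List.mem_cons_of_mem _ h')

theorem foldl_step_replicate_cl {τ : Type} (s : τ) : ∀ (m : ℕ) (c o : List τ),
    List.foldl step (c, o) (List.replicate m (Br.cl, s)) =
      (c ++ List.replicate (m - o.length) s, o.take (o.length - m)) := by
  intro m
  induction m with
  | zero => intro c o; simp
  | succ m ih =>
    intro c o
    rw [List.replicate_succ, List.foldl_cons]
    rcases List.eq_nil_or_concat' o with rfl | ⟨o', y, rfl⟩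
    · rw [step_cl_nil, ih]
      simp [List.replicate_succ]
    · rw [step_cl_concat, ih]
      congr 1
      · congr 1; simp
      · rw [List.length_append, List.length_singleton,
          show o'.length + 1 - (m+1) = o'.length - m by omega]
        rcases le_or_gt o'.length m with hh | hh
        · rw [Nat.sub_eq_zero_of_le hh]; simp
        · rw [List.take_append_of_le_length (by omega)]

/-- The block function of `Si`. -/
def blk (N : MS) (i k0 : ℕ) : List (Br × Seg) :=
  List.replicate (N.count (i - (k0+1) + 1, i)) (Br.op, ((i - (k0+1) + 1 : ℕ), i)) ++
  List.replicate (N.count (i - (k0+1), i - 1)) (Br.cl, ((i - (k0+1) : ℕ), i - 1))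

theorem Si_eq_flatMap (N : MS) (i : ℕ) : Si N i = (List.range i).flatMap (blk N i) := rfl

theorem mem_Si_cl (M : MS) (i : ℕ) (x : Seg) (hx : (Br.cl, x) ∈ Si M i) :
    0 < M.count x ∧ ∃ t0, t0 < i ∧ x = ((i - (t0+1) : ℕ), i - 1) := by
  rw [Si_eq_flatMap] at hx
  simp only [List.mem_flatMap, List.mem_range, blk, List.mem_append,
    List.mem_replicate, Prod.mk.injEq] at hx
  obtain ⟨t0, ht0, hx⟩ := hx
  rcases hx with ⟨_, h, _⟩ | ⟨hc, _, h⟩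
  · exact absurd h (by simp)
  · refine ⟨?_, t0, ht0, ?_⟩
    · rw [h]; exact Nat.pos_of_ne_zero hc
    · rw [h]

theorem Si_decomp (i h : ℕ) (hh1 : 1 ≤ h) (hh2 : h + 1 ≤ i) (M : MS)
    (hc : 0 < M.count (h, i-1)) :
    ∃ (A P Q : List (Br × Seg)),
      P = A ++ List.replicate (M.count (h, i-1) - 1) (Br.cl, ((h : ℕ), i-1)) ∧
      Si M i = P ++ (Br.cl, ((h : ℕ), i-1)) :: Q ∧
      Si (M.erase (h, i-1) + {((h : ℕ), i)}) i = P ++ (Br.op, ((h : ℕ), i)) :: Q ∧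
      (∀ x : Seg, (Br.cl, x) ∈ A → x ≠ (h, i-1)) ∧
      (∀ x : Seg, (Br.cl, x) ∈ Q → x ≠ (h, i-1)) := by
  set M' : MS := M.erase (h, i-1) + {((h : ℕ), i)} with hM'
  set t0 : ℕ := i - h - 1 with ht0
  have h2i : t0 + 2 ≤ i := by omega
  -- splitting the range
  have hsplit : List.range i = (List.range t0 ++ [t0, t0+1]) ++ List.range' (t0+2) (i - (t0+2)) := by
    have h1 := List.range'_append (s := 0) (m := t0+2) (n := i - (t0+2)) (step := 1)
    rw [show 0 + 1 * (t0+2) = t0 + 2 by omega, show t0 + 2 + (i - (t0+2)) = i by omega] at h1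
    rw [List.range_eq_range', ← h1, ← List.range_eq_range',
      List.range_succ, List.range_succ]
    simp
  -- count computations
  have cne : ∀ a b : ℕ, (a,b) ≠ ((h:ℕ), i-1) → (a,b) ≠ ((h:ℕ), i) →
      M'.count (a,b) = M.count (a,b) := by
    intro a b n1 n2
    rw [hM', Multiset.count_add, Multiset.count_erase_of_ne n1,
      Multiset.count_singleton, if_neg n2, add_zero]
  have c1 : M'.count (h, i-1) = M.count (h, i-1) - 1 := by
    rw [hM', Multiset.count_add, Multiset.count_erase_self,
      Multiset.count_singleton, if_neg (by simp; omega), add_zero]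
  have c2 : M'.count (h, i) = M.count (h, i) + 1 := by
    rw [hM', Multiset.count_add, Multiset.count_erase_of_ne (by simp; omega),
      Multiset.count_singleton, if_pos rfl]
  -- blocks away from t0, t0+1 are unchanged
  have hb1 : ∀ k0 ∈ List.range t0, blk M' i k0 = blk M i k0 := by
    intro k0 hk0
    rw [List.mem_range] at hk0
    rw [blk, blk, cne _ _ (by simp only [ne_eq, Prod.mk.injEq, not_and]; omega)
        (by simp only [ne_eq, Prod.mk.injEq, not_and]; omega),
      cne _ _ (by simp only [ne_eq, Prod.mk.injEq, not_and]; omega)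
        (by simp only [ne_eq, Prod.mk.injEq, not_and]; omega)]
  have hb2 : ∀ k0 ∈ List.range' (t0+2) (i - (t0+2)), blk M' i k0 = blk M i k0 := by
    intro k0 hk0
    rw [List.mem_range'] at hk0
    obtain ⟨j, hj, rfl⟩ := hk0
    rw [blk, blk, cne _ _ (by simp only [ne_eq, Prod.mk.injEq, not_and]; omega)
        (by simp only [ne_eq, Prod.mk.injEq, not_and]; omega),
      cne _ _ (by simp only [ne_eq, Prod.mk.injEq, not_and]; omega)
        (by simp only [ne_eq, Prod.mk.injEq, not_and]; omega)]
  -- the two middle blocks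
  have e1 : i - (t0+1) = h := by omega
  have e2 : i - (t0+1) + 1 = h + 1 := by omega
  have e3 : i - (t0+1+1) = h - 1 := by omega
  have e4 : i - (t0+1+1) + 1 = h := by omega
  have hbt : blk M i t0 =
      List.replicate (M.count (h+1, i)) (Br.op, ((h+1 : ℕ), i)) ++
      List.replicate (M.count (h, i-1)) (Br.cl, ((h : ℕ), i-1)) := by
    rw [blk, e1]
  have hbt' : blk M' i t0 =
      List.replicate (M.count (h+1, i)) (Br.op, ((h+1 : ℕ), i)) ++
      List.replicate (M.count (h, i-1) - 1) (Br.cl, ((h : ℕ), i-1)) := by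
    rw [blk, e1, c1, cne _ _ (by simp only [ne_eq, Prod.mk.injEq, not_and]; omega)
      (by simp only [ne_eq, Prod.mk.injEq, not_and]; omega)]
  have hbs : blk M i (t0+1) =
      List.replicate (M.count (h, i)) (Br.op, ((h : ℕ), i)) ++
      List.replicate (M.count (h-1, i-1)) (Br.cl, ((h-1 : ℕ), i-1)) := by
    rw [blk, e4, e3]
  have hbs' : blk M' i (t0+1) =
      (Br.op, ((h : ℕ), i)) :: (List.replicate (M.count (h, i)) (Br.op, ((h : ℕ), i)) ++
      List.replicate (M.count (h-1, i-1)) (Br.cl, ((h-1 : ℕ), i-1))) := by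
    rw [blk, e4, e3, c2, cne _ _ (by simp only [ne_eq, Prod.mk.injEq, not_and]; omega)
      (by simp only [ne_eq, Prod.mk.injEq, not_and]; omega), List.replicate_succ,
      List.cons_append]
  have hcrep : List.replicate (M.count (h, i-1)) (Br.cl, ((h : ℕ), i-1)) =
      List.replicate (M.count (h, i-1) - 1) (Br.cl, ((h : ℕ), i-1)) ++
        [(Br.cl, ((h : ℕ), i-1))] := by
    conv_lhs => rw [show M.count (h, i-1) = (M.count (h, i-1) - 1) + 1 by omega]
    rw [List.replicate_succ']
  refine ⟨(List.range t0).flatMap (blk M i) ++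
      List.replicate (M.count (h+1, i)) (Br.op, ((h+1 : ℕ), i)), _,
      List.replicate (M.count (h, i)) (Br.op, ((h : ℕ), i)) ++
      List.replicate (M.count (h-1, i-1)) (Br.cl, ((h-1 : ℕ), i-1)) ++
      (List.range' (t0+2) (i - (t0+2))).flatMap (blk M i), rfl, ?_, ?_, ?_, ?_⟩
  · rw [Si_eq_flatMap, hsplit, List.flatMap_append, List.flatMap_append,
      List.flatMap_cons, List.flatMap_cons, List.flatMap_nil, hbt, hbs, hcrep]
    simp [List.append_assoc]
  · rw [Si_eq_flatMap, hsplit, List.flatMap_append, List.flatMap_append,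
      List.flatMap_cons, List.flatMap_cons, List.flatMap_nil,
      List.flatMap_congr hb1, List.flatMap_congr hb2, hbt', hbs']
    simp [List.append_assoc]
  · intro x hx
    rcases List.mem_append.1 hx with hx | hx
    · rw [List.mem_flatMap] at hx
      obtain ⟨k0, hk0, hx⟩ := hx
      rw [List.mem_range] at hk0
      rw [blk] at hx
      rcases List.mem_append.1 hx with hx | hx
      · exact absurd (List.eq_of_mem_replicate hx) (by simp)
      · have := List.eq_of_mem_replicate hx
        rw [Prod.mk.injEq] at this
        rw [this.2]
        simp only [ne_eq, Prod.mk.injEq, not_and]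
        omega
    · exact absurd (List.eq_of_mem_replicate hx) (by simp)
  · intro x hx
    rcases List.mem_append.1 hx with hx | hx
    · rcases List.mem_append.1 hx with hx | hx
      · exact absurd (List.eq_of_mem_replicate hx) (by simp)
      · have := List.eq_of_mem_replicate hx
        rw [Prod.mk.injEq] at this
        rw [this.2]
        simp only [ne_eq, Prod.mk.injEq, not_and]
        omega
    · rw [List.mem_flatMap] at hx
      obtain ⟨k0, hk0, hx⟩ := hx
      rw [List.mem_range'] at hk0
      obtain ⟨j, hj, rfl⟩ := hk0
      rw [blk] at hx
      rcases List.mem_append.1 hx with hx | hx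
      · exact absurd (List.eq_of_mem_replicate hx) (by simp)
      · have := List.eq_of_mem_replicate hx
        rw [Prod.mk.injEq] at this
        rw [this.2]
        simp only [ne_eq, Prod.mk.injEq, not_and]
        omega

theorem Si_add_top (M : MS) (i : ℕ) (hi : 1 ≤ i) :
    Si (M + {((i:ℕ), i)}) i = (Br.op, ((i:ℕ), i)) :: Si M i := by
  obtain ⟨j, rfl⟩ : ∃ j, i = j + 1 := ⟨i - 1, by omega⟩
  have cadd : ∀ (a b : ℕ), (a,b) ≠ ((j+1:ℕ), j+1) →
      (M + {((j+1:ℕ), j+1)}).count (a,b) = M.count (a,b) := by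
    intro a b hne
    rw [Multiset.count_add, Multiset.count_singleton, if_neg hne, add_zero]
  rw [Si_eq_flatMap, Si_eq_flatMap, List.range_succ_eq_map, List.flatMap_cons,
    List.flatMap_cons]
  have hbtail : ∀ k0 ∈ List.map Nat.succ (List.range j),
      blk (M + {((j+1:ℕ), j+1)}) (j+1) k0 = blk M (j+1) k0 := by
    intro k0 hk0
    simp only [List.mem_map, List.mem_range] at hk0
    obtain ⟨k, hk, rfl⟩ := hk0
    rw [blk, blk, cadd _ _ (by simp only [ne_eq, Prod.mk.injEq, not_and]; omega),
      cadd _ _ (by simp only [ne_eq, Prod.mk.injEq, not_and]; omega)]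
  have e0 : j + 1 - (0+1) + 1 = j + 1 := by omega
  have e0' : j + 1 - (0+1) = j := by omega
  have hb0 : blk (M + {((j+1:ℕ), j+1)}) (j+1) 0 = (Br.op, ((j+1:ℕ), j+1)) :: blk M (j+1) 0 := by
    rw [blk, blk, e0, e0']
    rw [Multiset.count_add, Multiset.count_singleton, if_pos rfl,
      cadd _ _ (by simp only [ne_eq, Prod.mk.injEq, not_and]; omega),
      List.replicate_succ, List.cons_append]
  rw [List.flatMap_congr hbtail, hb0, List.cons_append]

theorem stmt19 (n i : ℕ) (hi : 1 ≤ i) (hin : i ≤ n) (M : MS) (hM : IsMS n M) :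
    epsStr (Si (fM i M) i) = epsStr (Si M i) + 1 ∧
    (0 < urStr (Si M i) → urStr (Si (fM i M) i) = urStr (Si M i) - 1) ∧
    (urStr (Si M i) = 0 → urStr (Si (fM i M) i) = 0) := by
  cases hlc : lastCl (Si M i) with
  | none =>
    have hfm : fM i M = M + {((i:ℕ), i)} := by unfold fM; rw [hlc]
    have hcls : (List.foldl step ([], ([] : List Seg)) (Si M i)).1 = [] :=
      List.getLast?_eq_none_iff.1 hlc
    have hscan' : List.foldl step ([], ([] : List Seg)) (Si (fM i M) i) =
        ([], ((i:ℕ), i) :: (List.foldl step ([], ([] : List Seg)) (Si M i)).2) := by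
      rw [hfm, Si_add_top M i hi, List.foldl_cons, step_op, List.nil_append]
      have h1 := foldl_step_ops (Si M i) [((i:ℕ), i)] [] hcls
      rw [List.append_nil] at h1
      rw [h1]
      rfl
    refine ⟨?_, ?_, ?_⟩
    · show (List.foldl step ([], ([] : List Seg)) (Si (fM i M) i)).2.length =
        (List.foldl step ([], ([] : List Seg)) (Si M i)).2.length + 1
      rw [hscan']
      simp
    · intro hpos
      exfalso
      have : urStr (Si M i) = 0 := by
        show (List.foldl step ([], ([] : List Seg)) (Si M i)).1.length = 0
        rw [hcls]; rfl
      omega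
    · intro _
      show (List.foldl step ([], ([] : List Seg)) (Si (fM i M) i)).1.length = 0
      rw [hscan']
      rfl
  | some s =>
    have hfm : fM i M = M.erase s + {(s.1, i)} := by unfold fM; rw [hlc]
    have hmem : s ∈ (List.foldl step ([], ([] : List Seg)) (Si M i)).1 :=
      List.mem_of_mem_getLast? hlc
    have hcl : (Br.cl, s) ∈ Si M i := by
      rcases mem_foldl_step_cls (Si M i) [] [] s hmem with h' | h'
      · simp at h'
      · exact h'
    obtain ⟨hcpos, t0', ht0', hs_eq⟩ := mem_Si_cl M i s hcl
    have hsM : s ∈ M := Multiset.count_pos.1 hcpos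
    obtain ⟨hs1, hs2, hs3⟩ := hM s hsM
    subst hs_eq
    set h : ℕ := i - (t0' + 1) with hhdef
    simp only at hs1 hs2 hs3
    have hh1 : 1 ≤ h := hs1
    have hh2 : h + 1 ≤ i := by omega
    have hfm2 : fM i M = M.erase (h, i-1) + {((h:ℕ), i)} := hfm
    obtain ⟨A, P, Q, hPA, hSiM, hSiM', hAne, hQne⟩ := Si_decomp i h hh1 hh2 M hcpos
    obtain ⟨cA, oA, hA⟩ : ∃ c o, List.foldl step ([], ([] : List Seg)) A = (c, o) := ⟨_, _, rfl⟩
    set c : ℕ := M.count (h, i - 1) with hcdef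
    have hscanP : List.foldl step ([], ([] : List Seg)) P =
        (cA ++ List.replicate (c - 1 - oA.length) ((h:ℕ), i-1),
          oA.take (oA.length - (c - 1))) := by
      rw [hPA, List.foldl_append, hA, foldl_step_replicate_cl]
    have hle : oA.length ≤ c - 1 := by
      by_contra hgt
      push_neg at hgt
      rw [show c - 1 - oA.length = 0 by omega] at hscanP
      simp only [List.replicate_zero, List.append_nil] at hscanP
      have htake : oA.take (oA.length - (c - 1)) ≠ [] := by
        apply List.ne_nil_of_length_pos
        rw [List.length_take]
        omega
      obtain ⟨o'', y, hoy⟩ :=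
        (List.eq_nil_or_concat' (oA.take (oA.length - (c - 1)))).resolve_left htake
      have hscanl : List.foldl step ([], ([] : List Seg)) (Si M i) =
          (cA ++ (List.foldl step ([], o'') Q).1, (List.foldl step ([], o'') Q).2) := by
        rw [hSiM, List.foldl_append, hscanP, hoy, List.foldl_cons, step_cl_concat,
          foldl_step_cls]
      have hsmem : ((h:ℕ), i-1) ∈ cA ++ (List.foldl step ([], o'') Q).1 := by
        have h1 : (List.foldl step ([], ([] : List Seg)) (Si M i)).1.getLast? =
            some ((h:ℕ), i-1) := hlc
        rw [hscanl] at h1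
        exact List.mem_of_mem_getLast? h1
      rcases List.mem_append.1 hsmem with hm | hm
      · have hm' : ((h:ℕ), i-1) ∈ (List.foldl step ([], ([] : List Seg)) A).1 := by
          rw [hA]; exact hm
        rcases mem_foldl_step_cls A [] [] _ hm' with h' | h'
        · simp at h'
        · exact hAne _ h' rfl
      · rcases mem_foldl_step_cls Q [] o'' _ hm with h' | h'
        · simp at h'
        · exact hQne _ h' rfl
    set cP : List Seg := cA ++ List.replicate (c - 1 - oA.length) ((h:ℕ), i-1) with hcPdef
    rw [show oA.length - (c - 1) = 0 by omega, List.take_zero] at hscanP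
    have hstepP : List.foldl step ([], ([] : List Seg)) (P ++ [(Br.cl, ((h:ℕ), i-1))]) =
        (cP ++ [((h:ℕ), i-1)], []) := by
      rw [List.foldl_append, hscanP, List.foldl_cons, step_cl_nil, List.foldl_nil]
    set N : List Seg := (List.foldl step ([], ([] : List Seg)) Q).1 with hN
    set o0 : List Seg := (List.foldl step ([], ([] : List Seg)) Q).2 with ho0
    have hscanM : List.foldl step ([], ([] : List Seg)) (Si M i) =
        ((cP ++ [((h:ℕ), i-1)]) ++ N, o0) := by
      rw [hSiM, show P ++ (Br.cl, ((h:ℕ), i-1)) :: Q =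
        (P ++ [(Br.cl, ((h:ℕ), i-1))]) ++ Q by simp]
      rw [List.foldl_append, hstepP, foldl_step_cls]
    have hNnil : N = [] := by
      rcases List.eq_nil_or_concat' N with h' | ⟨N', z, hz⟩
      · exact h'
      · exfalso
        have h1 : (List.foldl step ([], ([] : List Seg)) (Si M i)).1.getLast? =
            some ((h:ℕ), i-1) := hlc
        rw [hscanM] at h1
        dsimp only at h1
        rw [hz, ← List.append_assoc, List.getLast?_concat] at h1
        have hz' : z = ((h:ℕ), i-1) := by injection h1
        have hzmem : ((h:ℕ), i-1) ∈ N := by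
          rw [hz, hz']
          exact List.mem_append_right _ (List.mem_singleton_self _)
        rcases mem_foldl_step_cls Q [] [] _ hzmem with h' | h'
        · simp at h'
        · exact hQne _ h' rfl
    have hscanM' : List.foldl step ([], ([] : List Seg)) (Si (fM i M) i) =
        (cP, ((h:ℕ), i) :: o0) := by
      rw [hfm2, hSiM', show P ++ (Br.op, ((h:ℕ), i)) :: Q =
        (P ++ [(Br.op, ((h:ℕ), i))]) ++ Q by simp]
      rw [List.foldl_append, List.foldl_append, hscanP, List.foldl_cons, step_op,
        List.foldl_nil, List.nil_append]
      have h1 := foldl_step_ops Q [((h:ℕ), i)] [] hNnil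
      rw [List.append_nil] at h1
      rw [foldl_step_cls, h1]
      simp [← ho0]
    rw [hNnil, List.append_nil] at hscanM
    refine ⟨?_, ?_, ?_⟩
    · show (List.foldl step ([], ([] : List Seg)) (Si (fM i M) i)).2.length =
        (List.foldl step ([], ([] : List Seg)) (Si M i)).2.length + 1
      rw [hscanM, hscanM']
      simp
    · intro _
      show (List.foldl step ([], ([] : List Seg)) (Si (fM i M) i)).1.length =
        (List.foldl step ([], ([] : List Seg)) (Si M i)).1.length - 1
      rw [hscanM, hscanM']
      simp
    · intro h0
      exfalso
      have : (List.foldl step ([], ([] : List Seg)) (Si M i)).1.length = 0 := h0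
      rw [hscanM] at this
      simp at this
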